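/- For every positive integer n, there exists a positive integer m ≤ 2n such that n divides the m-th Fibonacci number. -/

import Mathlib

lemma fib_binet {R : Type*} [CommRing R] (a b : R) (hab : a + b = 1) (hm : a * b = -1) :
    ∀ k : ℕ, (a - b) * (Nat.fib k : R) = a ^ k - b ^ k := by
  have ha2 : a ^ 2 = a + 1 := by linear_combination a * hab - hm
  have hb2 : b ^ 2 = b + 1 := by linear_combination b * hab - hm
  intro k
  induction k using Nat.twoStepInduction with
  | zero => simp
  | one => simp
  | more k ih1 ih2 =>
    rw [Nat.fib_add_two]
    push_cast
    have : a ^ (k + 2) = a ^ k * a ^ 2 := by ring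
    have hb : b ^ (k + 2) = b ^ k * b ^ 2 := by ring
    rw [this, hb, ha2, hb2]
    linear_combination ih1 + ih2


lemma fib_mul_expand (m : ℕ) (hm : 0 < m) (j : ℕ) :
    (∃ c : ℤ, (Nat.fib ((j+1) * m) : ℤ) =
      (j+1) * Nat.fib m * (Nat.fib (m+1) : ℤ) ^ j + (Nat.fib m : ℤ) ^ 2 * c) ∧
    (∃ d : ℤ, (Nat.fib ((j+1) * m + 1) : ℤ) =
      (Nat.fib (m+1) : ℤ) ^ (j+1) + (Nat.fib m : ℤ) ^ 2 * d) := by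
  set F : ℤ := (Nat.fib m : ℤ) with hF
  set A : ℤ := (Nat.fib (m+1) : ℤ) with hA
  have h1 : m - 1 + 1 = m := Nat.succ_pred_eq_of_pos hm
  have hFA : (Nat.fib (m-1) : ℤ) = A - F := by
    rw [hA, hF]
    have h2 : m - 1 + 2 = m + 1 := by omega
    have h3 := Nat.fib_add_two (n := m - 1)
    rw [h1, h2] at h3
    omega
  induction j with
  | zero =>
    constructor
    · exact ⟨0, by simp [one_mul, hF]⟩
    · exact ⟨0, by simp [hA]⟩
  | succ j ih =>
    obtain ⟨⟨c, hc⟩, ⟨d, hd⟩⟩ := ih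
    have key : (j + 2) * m = (m - 1) + ((j+1) * m) + 1 := by
      have e : (j + 2) * m = m + (j+1) * m := by ring
      omega
    have key2 : (j + 2) * m + 1 = m + ((j+1) * m) + 1 := by ring
    have e1 : (Nat.fib ((j+2) * m) : ℤ)
        = (A - F) * Nat.fib ((j+1)*m) + F * Nat.fib ((j+1)*m + 1) := by
      rw [key, Nat.fib_add, h1]
      push_cast
      linear_combination (Nat.fib ((j+1)*m) : ℤ) * hFA
    have e2 : (Nat.fib ((j+2) * m + 1) : ℤ)
        = F * Nat.fib ((j+1)*m) + A * Nat.fib ((j+1)*m + 1) := by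
      rw [key2, Nat.fib_add]
      push_cast
      ring
    constructor
    · refine ⟨-(j+1) * A ^ j + (A - F) * c + F * d, ?_⟩
      rw [show ((j:ℕ)+1+1) * m = (j+2) * m from by ring, e1, hc, hd]
      push_cast
      ring
    · refine ⟨(j+1) * A ^ j + F * c + A * d, ?_⟩
      rw [show ((j:ℕ)+1+1) * m = (j+2) * m from by ring, e2, hc, hd]
      push_cast
      ring

lemma fib_pow_lift (p m : ℕ) (hp : 0 < p) (hm : 0 < m) (h : p ∣ Nat.fib m) :
    ∀ k : ℕ, p ^ (k+1) ∣ Nat.fib (p ^ k * m) := by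
  intro k
  induction k with
  | zero => simpa using h
  | succ k ih =>
    set N := p ^ k * m with hN
    have hNpos : 0 < N := by positivity
    obtain ⟨⟨c, hc⟩, -⟩ := fib_mul_expand N hNpos (p - 1)
    rw [show p - 1 + 1 = p from by omega] at hc
    have hcast : ((p - 1 : ℕ) : ℤ) + 1 = (p : ℤ) := by omega
    rw [hcast] at hc
    have hstep : p ^ (k+1) * m = p * N := by rw [hN]; ring
    rw [hstep, ← Int.natCast_dvd_natCast]
    obtain ⟨t, ht⟩ : ((p : ℤ)) ^ (k+1) ∣ (Nat.fib N : ℤ) := by exact_mod_cast ih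
    rw [hc, ht]
    push_cast
    exact ⟨t * (Nat.fib (N+1) : ℤ) ^ (p-1) + p ^ k * t ^ 2 * c, by ring⟩

open Polynomial in
lemma fib_local (p : ℕ) (hp : p.Prime) (hp5 : p ≠ 5) :
    p ∣ Nat.fib (p - 1) ∨ p ∣ Nat.fib (p + 1) := by
  haveI : Fact p.Prime := ⟨hp⟩
  have hppos : 0 < p := hp.pos
  have h5 : (5 : ZMod p) ≠ 0 := by
    intro h
    rw [show (5 : ZMod p) = ((5 : ℕ) : ZMod p) from by push_cast; ring,
      ZMod.natCast_eq_zero_iff] at h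
    rcases (Nat.prime_dvd_prime_iff_eq hp (by norm_num)).mp h with rfl
    exact hp5 rfl
  by_cases hr : ∃ a : ZMod p, a * a = a + 1
  · -- split case: root in ZMod p
    left
    obtain ⟨a, ha⟩ := hr
    set b : ZMod p := 1 - a with hb
    have hab : a + b = 1 := by rw [hb]; ring
    have hm : a * b = -1 := by rw [hb]; linear_combination -ha
    have hd2 : (a - b) ^ 2 = 5 := by
      rw [hb]; linear_combination 4 * ha
    have hdne : a - b ≠ 0 := fun h => h5 (by rw [← hd2, h]; ring)
    have hmne : a * b ≠ 0 := by rw [hm]; exact neg_ne_zero.mpr one_ne_zero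
    have hane : a ≠ 0 := fun h => hmne (by rw [h, zero_mul])
    have hbne : b ≠ 0 := fun h => hmne (by rw [h, mul_zero])
    have key := fib_binet a b hab hm (p - 1)
    rw [ZMod.pow_card_sub_one_eq_one hane, ZMod.pow_card_sub_one_eq_one hbne, sub_self] at key
    have : (Nat.fib (p-1) : ZMod p) = 0 := by
      rcases mul_eq_zero.mp key with h | h
      · exact absurd h hdne
      · exact h
    exact (ZMod.natCast_eq_zero_iff _ _).mp this
  · -- inert case: work in K = AdjoinRoot (X^2 - X - 1)
    push_neg at hr
    set f : (ZMod p)[X] := X ^ 2 - X - 1 with hf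
    have hfmonic : f.Monic := by rw [hf]; monicity!
    have hfdeg : f.natDegree = 2 := by rw [hf]; compute_degree!
    have hfne : f ≠ 0 := hfmonic.ne_zero
    have hirr : Irreducible f := by
      rw [Polynomial.irreducible_iff_roots_eq_zero_of_degree_le_three (by omega) (by omega)]
      rw [Multiset.eq_zero_iff_forall_notMem]
      intro x hx
      rw [Polynomial.mem_roots hfne, Polynomial.IsRoot, hf] at hx
      simp only [Polynomial.eval_sub, Polynomial.eval_pow, Polynomial.eval_X,
        Polynomial.eval_one] at hx
      exact hr x (by linear_combination hx)
    haveI : Fact (Irreducible f) := ⟨hirr⟩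
    set K := AdjoinRoot f
    haveI : CharP K p := charP_of_injective_algebraMap (algebraMap (ZMod p) K).injective p
    set α : K := AdjoinRoot.root f with hα
    have hroot : α ^ 2 = α + 1 := by
      have := AdjoinRoot.eval₂_root f
      rw [hf] at this
      simp only [Polynomial.eval₂_sub, Polynomial.eval₂_pow, Polynomial.eval₂_X,
        Polynomial.eval₂_one] at this
      rw [hα]
      linear_combination this
    set β : K := 1 - α with hβ
    have hab : α + β = 1 := by rw [hβ]; ring
    have hm : α * β = -1 := by rw [hβ]; linear_combination -hroot
    have h5K : (5 : K) ≠ 0 := by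
      intro h
      rw [show (5 : K) = ((5 : ℕ) : K) from by push_cast; ring,
        CharP.cast_eq_zero_iff K p] at h
      rcases (Nat.prime_dvd_prime_iff_eq hp (by norm_num)).mp h with rfl
      exact hp5 rfl
    have hd2 : (α - β) ^ 2 = 5 := by rw [hβ]; linear_combination 4 * hroot
    have hdne : α - β ≠ 0 := fun h => h5K (by rw [← hd2, h]; ring)
    have hmne : α * β ≠ 0 := by rw [hm]; exact neg_ne_zero.mpr one_ne_zero
    have hane : α ≠ 0 := fun h => hmne (by rw [h, zero_mul])
    have hbne : β ≠ 0 := fun h => hmne (by rw [h, mul_zero])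
    have hfrob : (α ^ p - α) * (α ^ p - β) = 0 := by
      have h2p : (α ^ p) ^ 2 = α ^ p + 1 := by
        rw [← pow_mul, mul_comm, pow_mul, hroot, add_pow_char, one_pow]
      linear_combination h2p + (α ^ p) * hab.symm + hm
    have hβp : β ^ p = 1 - α ^ p := by
      rw [hβ, sub_pow_char, one_pow]
    rcases mul_eq_zero.mp hfrob with h | h
    · -- α^p = α : conclude p ∣ fib (p-1)
      left
      have hαp : α ^ p = α := by linear_combination h
      have hβp' : β ^ p = β := by rw [hβp, hαp, ← hβ]
      have hα1 : α ^ (p - 1) = 1 := by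
        have : α ^ (p - 1) * α = 1 * α := by
          rw [one_mul, ← pow_succ, show p - 1 + 1 = p from by omega, hαp]
        exact mul_right_cancel₀ hane this
      have hβ1 : β ^ (p - 1) = 1 := by
        have : β ^ (p - 1) * β = 1 * β := by
          rw [one_mul, ← pow_succ, show p - 1 + 1 = p from by omega, hβp']
        exact mul_right_cancel₀ hbne this
      have key := fib_binet α β hab hm (p - 1)
      rw [hα1, hβ1, sub_self] at key
      have : (Nat.fib (p - 1) : K) = 0 := by
        rcases mul_eq_zero.mp key with h' | h'
        · exact absurd h' hdne
        · exact h'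
      exact (CharP.cast_eq_zero_iff K p _).mp this
    · -- α^p = β : conclude p ∣ fib (p+1)
      right
      have hαp : α ^ p = β := by linear_combination h
      have hβp' : β ^ p = α := by rw [hβp, hαp, hβ]; ring
      have hα1 : α ^ (p + 1) = -1 := by rw [pow_succ, hαp, mul_comm, hm]
      have hβ1 : β ^ (p + 1) = -1 := by rw [pow_succ, hβp', hm]
      have key := fib_binet α β hab hm (p + 1)
      rw [hα1, hβ1, sub_self] at key
      have : (Nat.fib (p + 1) : K) = 0 := by
        rcases mul_eq_zero.mp key with h' | h'
        · exact absurd h' hdne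
        · exact h'
      exact (CharP.cast_eq_zero_iff K p _).mp this

lemma fib_odd_witness : ∀ n : ℕ, Odd n →
    ∃ m : ℕ, 0 < m ∧ n ∣ Nat.fib m ∧ ((Odd m ∧ m ≤ n) ∨ (Even m ∧ 3 * m ≤ 4 * n)) := by
  intro n
  induction n using Nat.recOnPosPrimePosCoprime with
  | prime_pow p k hp hk =>
    intro hodd
    have hp' : p.Prime := hp
    have hp2 : p ≠ 2 := by
      rintro rfl
      exact (Nat.not_odd_iff_even.mpr (Nat.even_pow.mpr ⟨even_two, by omega⟩)) hodd
    have hp3 : 3 ≤ p := by have := hp'.two_le; omega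
    by_cases hp5 : p = 5
    · subst hp5
      refine ⟨5 ^ k, by positivity, ?_, Or.inl ⟨hodd, le_refl _⟩⟩
      have := fib_pow_lift 5 5 (by norm_num) (by norm_num) (by decide) (k - 1)
      rwa [show k - 1 + 1 = k from by omega, show 5 ^ (k-1) * 5 = 5 ^ k from by
        rw [← pow_succ]; congr 1; omega] at this
    · -- p odd prime, p ≠ 5
      have hpodd : Odd p := hp'.odd_of_ne_two hp2
      obtain ⟨t, hdvd, hteven, ht2, ht4⟩ :
          ∃ t, (p ∣ Nat.fib t) ∧ Even t ∧ 2 ≤ t ∧ 3 * t ≤ 4 * p := by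
        rcases fib_local p hp' hp5 with h | h
        · refine ⟨p - 1, h, ?_, by omega, by omega⟩
          rcases hpodd with ⟨c, hc⟩
          exact ⟨c, by omega⟩
        · refine ⟨p + 1, h, ?_, by omega, by omega⟩
          rcases hpodd with ⟨c, hc⟩
          exact ⟨c + 1, by omega⟩
      refine ⟨p ^ (k-1) * t, Nat.mul_pos (pow_pos hp'.pos _) (by omega), ?_,
        Or.inr ⟨hteven.mul_left _, ?_⟩⟩
      · have := fib_pow_lift p t hp'.pos (by omega) hdvd (k - 1)
        rwa [show k - 1 + 1 = k from by omega] at this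
      · have hpk : p ^ k = p ^ (k-1) * p := by
          rw [← pow_succ, show k - 1 + 1 = k from by omega]
        calc 3 * (p ^ (k-1) * t) = p ^ (k-1) * (3 * t) := by ring
          _ ≤ p ^ (k-1) * (4 * p) := Nat.mul_le_mul_left _ ht4
          _ = 4 * p ^ k := by rw [hpk]; ring
  | zero => intro h; simp at h
  | one => exact fun _ => ⟨1, by norm_num⟩
  | coprime a b ha hb hab iha ihb =>
    intro hodd
    rw [Nat.odd_mul] at hodd
    obtain ⟨m1, hm1pos, hm1dvd, hm1⟩ := iha hodd.1
    obtain ⟨m2, hm2pos, hm2dvd, hm2⟩ := ihb hodd.2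
    set L := Nat.lcm m1 m2 with hL
    have hLpos : 0 < L := Nat.lcm_pos hm1pos hm2pos
    have hdvd : a * b ∣ Nat.fib L :=
      (Nat.Coprime.mul_dvd_of_dvd_of_dvd hab
        (hm1dvd.trans (Nat.fib_dvd _ _ (Nat.dvd_lcm_left _ _)))
        (hm2dvd.trans (Nat.fib_dvd _ _ (Nat.dvd_lcm_right _ _))))
    have hLdvd : L ∣ m1 * m2 := Nat.lcm_dvd_mul _ _
    have hLle : L ≤ m1 * m2 := Nat.le_of_dvd (Nat.mul_pos hm1pos hm2pos) hLdvd
    refine ⟨L, hLpos, hdvd, ?_⟩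
    rcases hm1 with ⟨ho1, hle1⟩ | ⟨he1, hle1⟩ <;> rcases hm2 with ⟨ho2, hle2⟩ | ⟨he2, hle2⟩
    · -- odd odd
      left
      refine ⟨?_, le_trans hLle (Nat.mul_le_mul hle1 hle2)⟩
      rcases Nat.even_or_odd L with he | ho
      · exfalso
        have h2 : (2:ℕ) ∣ m1 * m2 := he.two_dvd.trans hLdvd
        rcases (Nat.prime_two.dvd_mul).mp h2 with h | h
        · exact (Nat.not_even_iff_odd.mpr ho1) ((even_iff_two_dvd).mpr h)
        · exact (Nat.not_even_iff_odd.mpr ho2) ((even_iff_two_dvd).mpr h)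
      · exact ho
    · -- odd even
      right
      refine ⟨(even_iff_two_dvd.mpr (dvd_trans (even_iff_two_dvd.mp he2) (Nat.dvd_lcm_right _ _))), ?_⟩
      calc 3 * L ≤ 3 * (m1 * m2) := by omega
        _ = m1 * (3 * m2) := by ring
        _ ≤ a * (4 * b) := Nat.mul_le_mul hle1 hle2
        _ = 4 * (a * b) := by ring
    · -- even odd
      right
      refine ⟨(even_iff_two_dvd.mpr (dvd_trans (even_iff_two_dvd.mp he1) (Nat.dvd_lcm_left _ _))), ?_⟩
      calc 3 * L ≤ 3 * (m1 * m2) := by omega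
        _ = (3 * m1) * m2 := by ring
        _ ≤ (4 * a) * b := Nat.mul_le_mul hle1 hle2
        _ = 4 * (a * b) := by ring
    · -- even even
      right
      refine ⟨(even_iff_two_dvd.mpr (dvd_trans (even_iff_two_dvd.mp he1) (Nat.dvd_lcm_left _ _))), ?_⟩
      have hgcd : 2 ∣ Nat.gcd m1 m2 :=
        Nat.dvd_gcd (even_iff_two_dvd.mp he1) (even_iff_two_dvd.mp he2)
      have hprod : Nat.gcd m1 m2 * L = m1 * m2 := Nat.gcd_mul_lcm _ _
      have h2L : 2 * L ≤ m1 * m2 := by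
        obtain ⟨g, hg⟩ := hgcd
        rw [hg] at hprod
        have hgpos : 0 < g := by
          rcases Nat.eq_zero_or_pos g with rfl | h
          · simp at hprod
            omega
          · exact h
        nlinarith [hLpos]
      have h9 : (3 * m1) * (3 * m2) ≤ (4 * a) * (4 * b) := Nat.mul_le_mul hle1 hle2
      have h16 : 9 * (m1 * m2) ≤ 16 * (a * b) := by nlinarith
      omega

lemma fib_two_part (a n' : ℕ) (hodd : Odd n') (hn'pos : 0 < n') :
    ∃ m : ℕ, 0 < m ∧ m ≤ 2 * (2 ^ a * n') ∧ (2 ^ a * n') ∣ Nat.fib m := by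
  have hcop : Nat.Coprime (2 ^ a) n' :=
    Nat.Coprime.pow_left _ (Nat.coprime_two_left.mpr hodd)
  obtain ⟨m', hm'pos, hm'dvd, hm'⟩ := fib_odd_witness n' hodd
  rcases (by omega : a = 0 ∨ a = 1 ∨ 2 ≤ a) with rfl | rfl | ha2
  · -- a = 0
    refine ⟨m', hm'pos, ?_, by simpa using hm'dvd⟩
    rcases hm' with ⟨-, h⟩ | ⟨-, h⟩ <;> (simp only [pow_zero, one_mul]; omega)
  · -- a = 1
    set L := Nat.lcm 3 m' with hLdef
    have h2 : (2 : ℕ) ∣ Nat.fib 3 := by decide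
    have hdvd : 2 ^ 1 * n' ∣ Nat.fib L :=
      Nat.Coprime.mul_dvd_of_dvd_of_dvd hcop
        (by rw [pow_one]; exact h2.trans (Nat.fib_dvd _ _ (Nat.dvd_lcm_left _ _)))
        (hm'dvd.trans (Nat.fib_dvd _ _ (Nat.dvd_lcm_right _ _)))
    have hLle : L ≤ 3 * m' := Nat.le_of_dvd (by omega) (Nat.lcm_dvd_mul _ _)
    refine ⟨L, Nat.lcm_pos (by norm_num) hm'pos, ?_, hdvd⟩
    rcases hm' with ⟨-, h⟩ | ⟨-, h⟩ <;> (simp only [pow_one]; omega)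
  · -- a ≥ 2
    set q := 2 ^ (a - 1) with hqdef
    have hqpos : 0 < q := by positivity
    have hq : 2 ^ a = 2 * q := by
      rw [hqdef, ← pow_succ', show a - 1 + 1 = a from by omega]
    set w := q * 3 with hw
    have hwdvd : 2 ^ a ∣ Nat.fib w := by
      have := fib_pow_lift 2 3 (by norm_num) (by norm_num) (by decide) (a - 1)
      rwa [show a - 1 + 1 = a from by omega] at this
    set L := Nat.lcm w m' with hLdef
    have hwpos : 0 < w := by positivity
    have hdvd : 2 ^ a * n' ∣ Nat.fib L :=
      Nat.Coprime.mul_dvd_of_dvd_of_dvd hcop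
        (hwdvd.trans (Nat.fib_dvd _ _ (Nat.dvd_lcm_left _ _)))
        (hm'dvd.trans (Nat.fib_dvd _ _ (Nat.dvd_lcm_right _ _)))
    refine ⟨L, Nat.lcm_pos hwpos hm'pos, ?_, hdvd⟩
    have h2n : 2 * (2 ^ a * n') = q * 4 * n' := by rw [hq]; ring
    rcases hm' with ⟨ho, h⟩ | ⟨he, h⟩
    · -- m' odd : L ≤ w * m' ≤ 3 q n' ≤ 4 q n' = 2n
      have hLle : L ≤ w * m' := Nat.le_of_dvd (Nat.mul_pos hwpos hm'pos) (Nat.lcm_dvd_mul _ _)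
      have hstep : w * m' ≤ q * 3 * n' := by
        rw [hw]
        exact Nat.mul_le_mul_left _ h
      rw [h2n]
      nlinarith [hqpos, hn'pos]
    · -- m' even: 2L ≤ w * m', 3 m' ≤ 4 n' ⇒ 6L ≤ 3 w m' ≤ w * 4 n' = 12 q n' = 6 n
      have hgcd : 2 ∣ Nat.gcd w m' := Nat.dvd_gcd
        (by rw [hw, hqdef]; exact dvd_mul_of_dvd_left (dvd_pow_self 2 (by omega)) 3)
        (even_iff_two_dvd.mp he)
      have hprod : Nat.gcd w m' * L = w * m' := Nat.gcd_mul_lcm _ _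
      have h2L : 2 * L ≤ w * m' := by
        obtain ⟨g, hg⟩ := hgcd
        rw [hg] at hprod
        have hgpos : 0 < g := by
          rcases Nat.eq_zero_or_pos g with rfl | hgp
          · simp at hprod; omega
          · exact hgp
        nlinarith [Nat.lcm_pos hwpos hm'pos]
      have hwm : 3 * (w * m') = q * 3 * (3 * m') := by rw [hw]; ring
      have hstep : q * 3 * (3 * m') ≤ q * 3 * (4 * n') := Nat.mul_le_mul_left _ h
      have h6n : 6 * (2 * (2 ^ a * n')) = 2 * (q * 3 * (4 * n')) := by rw [hq]; ring
      omega

theorem fib_entry_le_two_mul (n : ℕ) (hn : 0 < n) :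
    ∃ m : ℕ, 0 < m ∧ m ≤ 2 * n ∧ n ∣ Nat.fib m := by
  have hfact : 2 ^ n.factorization 2 * (n / 2 ^ n.factorization 2) = n :=
    Nat.ordProj_mul_ordCompl_eq_self n 2
  have hn'pos : 0 < n / 2 ^ n.factorization 2 := Nat.ordCompl_pos 2 hn.ne'
  have hodd : Odd (n / 2 ^ n.factorization 2) := by
    have h := Nat.not_dvd_ordCompl Nat.prime_two hn.ne'
    rw [Nat.odd_iff]
    omega
  obtain ⟨m, hmpos, hmle, hmdvd⟩ :=
    fib_two_part (n.factorization 2) (n / 2 ^ n.factorization 2) hodd hn'pos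
  rw [hfact] at hmle hmdvd
  exact ⟨m, hmpos, hmle, hmdvd⟩
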